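/- Batched SOFW expected primal convergence. Let $n \geq m \geq 1$ be natural numbers, let $E$ be a finite-dimensional real inner product space, and for each block $i \in \mathrm{Fin}\ n$ let $D_i \subseteq E$ be a nonempty convex compact set. Let $\Psi : E \to \mathbb{R}$ be convex and differentiable, and let $C_i \geq 0$ be block curvature constants satisfying: for every family $(x_j)_{j}$ with $x_j \in D_j$, every $s \in D_i$, and every $\gamma \in [0,1]$, $\Psi\big(\sum_j x_j + \gamma(s - x_i)\big) \leq \Psi\big(\sum_j x_j\big) + \gamma \big\langle \nabla \Psi(\sum_j x_j),\, s - x_i \big\rangle + \frac{\gamma^2}{2} C_i$; set $C^{\otimes} = \sum_i C_i$. Fix an initial decomposition $x^0 = (x^0_i)_i$ with $x^0_i \in D_i$, step sizes $\gamma_k = \frac{2n}{k+2n}$, and for each point define Frank-Wolfe atoms $s_i(x) \in \arg\min_{s \in D_i} \langle \nabla \Psi(\sum_j x_j), s \rangle$. Given a sequence $\omega = (I_0, I_1, \dots)$ of subsets of $\mathrm{Fin}\ n$ of cardinality $m$, define iterates by $x^{k+1}_i = x^k_i + \frac{\gamma_k}{m}(s_i(x^k) - x^k_i)$ for $i \in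 I_k$ and $x^{k+1}_i = x^k_i$ otherwise. Let $\Psi^* = \min_{y_i \in D_i} \Psi(\sum_i y_i)$. Then for every $k \geq 0$, the average of $\Psi(\sum_i x^k_i)$ over all $\binom{n}{m}^k$ choices of the batch sequence $(I_0, \dots, I_{k-1})$ (each batch drawn independently and uniformly among subsets of cardinality $m$) satisfies $\mathbb{E}\big[\Psi(\textstyle\sum_i x^k_i)\big] - \Psi^* \leq \frac{2n}{k + 2n}\Big[C^{\otimes} + \Psi(\textstyle\sum_i x^0_i) - \Psi^*\Big]$. -/

import Mathlib

open RealInnerProductSpace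

/-- Gradient inequality for a convex differentiable function. -/
lemma sofw_gradient_ineq {E : Type*} [NormedAddCommGroup E] [InnerProductSpace ℝ E]
    [CompleteSpace E] {Ψ : E → ℝ} (hconv : ConvexOn ℝ Set.univ Ψ)
    (hdiff : Differentiable ℝ Ψ) (x y : E) :
    ⟪gradient Ψ x, y - x⟫ ≤ Ψ y - Ψ x := by
  have hinner : ⟪gradient Ψ x, y - x⟫ = fderiv ℝ Ψ x (y - x) := by
    rw [gradient, InnerProductSpace.toDual_symm_apply]
  have hline : HasDerivAt (fun t : ℝ => x + t • (y - x)) (y - x) 0 := by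
    simpa using ((hasDerivAt_id (0 : ℝ)).smul_const (y - x)).const_add x
  have hφ : HasDerivAt (fun t : ℝ => Ψ (x + t • (y - x))) (fderiv ℝ Ψ x (y - x)) 0 := by
    have h1 : HasFDerivAt Ψ (fderiv ℝ Ψ x) (x + (0 : ℝ) • (y - x)) := by
      simpa using (hdiff x).hasFDerivAt
    exact h1.comp_hasDerivAt 0 hline
  rw [hinner]
  have hslope := hasDerivAt_iff_tendsto_slope.1 hφ
  have hslope' : Filter.Tendsto (slope (fun t : ℝ => Ψ (x + t • (y - x))) 0)
      (nhdsWithin 0 (Set.Ioi 0)) (nhds (fderiv ℝ Ψ x (y - x))) :=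
    hslope.mono_left (nhdsWithin_mono 0 (fun t ht => ne_of_gt ht))
  refine le_of_tendsto hslope' ?_
  filter_upwards [Ioc_mem_nhdsGT (one_pos : (0:ℝ) < 1)] with t ht
  obtain ⟨ht0, ht1⟩ := ht
  have hc : Ψ (x + t • (y - x)) ≤ (1 - t) * Ψ x + t * Ψ y := by
    have := hconv.2 (Set.mem_univ x) (Set.mem_univ y) (by linarith : (0:ℝ) ≤ 1 - t)
      (le_of_lt ht0) (by ring)
    simpa [smul_eq_mul, sub_smul, one_smul] using
      this.trans_eq' (by congr 1; module)
  have hslope_eq : slope (fun t : ℝ => Ψ (x + t • (y - x))) 0 t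
      = (Ψ (x + t • (y - x)) - Ψ x) / t := by
    simp [slope, ht0.ne', inv_mul_eq_div]
  rw [hslope_eq, div_le_iff₀ ht0]
  nlinarith

lemma sofw_count {n m : ℕ} (hm : 1 ≤ m) (i : Fin n) :
    ((Finset.powersetCard m (Finset.univ : Finset (Fin n))).filter (fun I => i ∈ I)).card
      = (n - 1).choose (m - 1) := by
  have hcard : ((Finset.univ : Finset (Fin n)).erase i).card = n - 1 := by
    rw [Finset.card_erase_of_mem (Finset.mem_univ i), Finset.card_univ, Fintype.card_fin]
  rw [← hcard, ← Finset.card_powersetCard]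
  refine Finset.card_bij' (fun I _ => I.erase i) (fun J _ => insert i J) ?hi ?hj ?li ?ri
  case hi =>
    intro I hI
    rw [Finset.mem_filter, Finset.mem_powersetCard] at hI
    rw [Finset.mem_powersetCard]
    exact ⟨fun j hj => Finset.mem_erase.2 ⟨(Finset.mem_erase.1 hj).1, Finset.mem_univ j⟩,
      by rw [Finset.card_erase_of_mem hI.2, hI.1.2]⟩
  case hj =>
    intro J hJ
    rw [Finset.mem_powersetCard] at hJ
    rw [Finset.mem_filter, Finset.mem_powersetCard]
    have hiJ : i ∉ J := fun h => (Finset.mem_erase.1 (hJ.1 h)).1 rfl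
    refine ⟨⟨Finset.subset_univ _, ?_⟩, Finset.mem_insert_self i J⟩
    rw [Finset.card_insert_of_notMem hiJ, hJ.2]
    omega
  case li =>
    intro I hI
    rw [Finset.mem_filter] at hI
    exact Finset.insert_erase hI.2
  case ri =>
    intro J hJ
    rw [Finset.mem_powersetCard] at hJ
    exact Finset.erase_insert (fun h => (Finset.mem_erase.1 (hJ.1 h)).1 rfl)

lemma sofw_sum_batch {n m : ℕ} (a : Fin n → ℝ) (hm : 1 ≤ m) :
    ∑ I ∈ Finset.powersetCard m (Finset.univ : Finset (Fin n)), ∑ i ∈ I, a i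
      = ((n - 1).choose (m - 1) : ℝ) * ∑ i, a i := by
  have h1 : ∀ I ∈ Finset.powersetCard m (Finset.univ : Finset (Fin n)),
      ∑ i ∈ I, a i = ∑ i : Fin n, if i ∈ I then a i else 0 := by
    intro I _
    rw [Finset.sum_ite_mem, Finset.univ_inter]
  rw [Finset.sum_congr rfl h1, Finset.sum_comm, Finset.mul_sum]
  refine Finset.sum_congr rfl fun i _ => ?_
  rw [← Finset.sum_filter, Finset.sum_const, sofw_count hm i, nsmul_eq_mul]

lemma sofw_sum_snoc {α : Type*} [DecidableEq α] (k : ℕ) (t : Finset α)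
    (F : (Fin (k + 1) → α) → ℝ) :
    ∑ σ ∈ Fintype.piFinset (fun _ : Fin (k + 1) => t), F σ
      = ∑ σ ∈ Fintype.piFinset (fun _ : Fin k => t), ∑ I ∈ t, F (Fin.snoc σ I) := by
  rw [← Finset.sum_product']
  refine Finset.sum_bij' (fun σ _ => (Fin.init σ, σ (Fin.last k)))
    (fun p _ => Fin.snoc p.1 p.2) ?hi ?hj ?li ?ri ?h
  case hi =>
    intro σ hσ
    rw [Fintype.mem_piFinset] at hσ
    exact Finset.mem_product.2 ⟨Fintype.mem_piFinset.2 fun j => hσ _, hσ _⟩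
  case hj =>
    intro p hp
    rw [Finset.mem_product] at hp
    rw [Fintype.mem_piFinset]
    intro j
    rcases Fin.eq_castSucc_or_eq_last j with ⟨j', rfl⟩ | rfl
    · simpa using Fintype.mem_piFinset.1 hp.1 j'
    · simpa using hp.2
  case li => intro σ _; exact Fin.snoc_init_self σ
  case ri => intro p _; simp
  case h => intro σ _; rw [Fin.snoc_init_self σ]

lemma sofw_rec_bound {n : ℕ} (hn : 1 ≤ n) (Cq B : ℝ) (hCq : 0 ≤ Cq) (hCB : Cq ≤ B)
    (h : ℕ → ℝ) (h0 : h 0 ≤ B)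
    (hrec : ∀ k : ℕ, h (k + 1) ≤ (1 - 2 / ((k : ℝ) + 2 * n)) * h k
      + (2 * (n : ℝ) / ((k : ℝ) + 2 * n)) ^ 2 / (2 * n) * Cq) :
    ∀ k : ℕ, h k ≤ 2 * (n : ℝ) / ((k : ℝ) + 2 * n) * B := by
  have hn1 : (1 : ℝ) ≤ n := by exact_mod_cast hn
  have hB : 0 ≤ B := hCq.trans hCB
  intro k
  induction k with
  | zero =>
    have h2n : (0:ℝ) < 2 * n := by linarith
    rw [Nat.cast_zero, zero_add, div_self h2n.ne', one_mul]
    exact h0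
  | succ k ih =>
    set a : ℝ := (k : ℝ) + 2 * n with ha
    have ha2 : 2 ≤ a := by
      have : (0:ℝ) ≤ (k:ℝ) := Nat.cast_nonneg k
      simp only [ha]; linarith
    have ha0 : 0 < a := by linarith
    have hcoef : 0 ≤ 1 - 2 / a := by
      rw [sub_nonneg, div_le_one ha0]; linarith
    have step := hrec k
    have h1 : h (k + 1) ≤ (1 - 2 / a) * (2 * n / a * B) + (2 * n / a) ^ 2 / (2 * n) * Cq :=
      step.trans (by
        have := mul_le_mul_of_nonneg_left ih hcoef
        linarith)
    have h2 : (1 - 2 / a) * (2 * n / a * B) + (2 * n / a) ^ 2 / (2 * n) * Cq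
        ≤ 2 * n / (a + 1) * B := by
      have hsq : (2 * (n:ℝ) / a) ^ 2 / (2 * n) = 2 * n / a ^ 2 := by
        field_simp
      rw [hsq]
      have e1 : (1 - 2 / a) * (2 * n / a * B) = 2 * n * (a - 2) / a ^ 2 * B := by
        field_simp
      rw [e1]
      have hCqB : 2 * (n:ℝ) / a ^ 2 * Cq ≤ 2 * n / a ^ 2 * B :=
        mul_le_mul_of_nonneg_left hCB (by positivity)
      have key0 : 2 * (n:ℝ) * (a - 2) / a ^ 2 + 2 * n / a ^ 2 ≤ 2 * n / (a + 1) := by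
        rw [← add_div, div_le_div_iff₀ (by positivity) (by positivity)]
        nlinarith
      have key : 2 * (n:ℝ) * (a - 2) / a ^ 2 * B + 2 * n / a ^ 2 * B ≤ 2 * n / (a + 1) * B := by
        have := mul_le_mul_of_nonneg_right key0 hB
        linarith [this]
      linarith
    have hfin : ((k:ℝ) + 1) + 2 * n = a + 1 := by rw [ha]; push_cast; ring
    calc h (k+1) ≤ _ := h1
      _ ≤ 2 * n / (a+1) * B := h2
      _ = 2 * n / (((k:ℝ)+1) + 2*n) * B := by rw [hfin]
      _ = 2 * n / (((k+1 : ℕ):ℝ) + 2*n) * B := by push_cast; ring_nf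

theorem batched_SOFW_expected_primal_convergence
    {E : Type*} [NormedAddCommGroup E] [InnerProductSpace ℝ E] [FiniteDimensional ℝ E]
    (n m : ℕ) (hm : 1 ≤ m) (hmn : m ≤ n)
    (D : Fin n → Set E) (hDne : ∀ i, (D i).Nonempty)
    (hDconv : ∀ i, Convex ℝ (D i)) (hDcomp : ∀ i, IsCompact (D i))
    (Ψ : E → ℝ) (hconv : ConvexOn ℝ Set.univ Ψ) (hdiff : Differentiable ℝ Ψ)
    (C : Fin n → ℝ) (hC0 : ∀ i, 0 ≤ C i)
    (hcurv : ∀ x : Fin n → E, (∀ j, x j ∈ D j) → ∀ i : Fin n, ∀ s ∈ D i,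
      ∀ γ ∈ Set.Icc (0 : ℝ) 1,
      Ψ ((∑ j, x j) + γ • (s - x i)) ≤
        Ψ (∑ j, x j) + γ * ⟪gradient Ψ (∑ j, x j), s - x i⟫ + γ ^ 2 / 2 * C i)
    (x0 : Fin n → E) (hx0 : ∀ i, x0 i ∈ D i)
    (γ : ℕ → ℝ) (hγ : ∀ k : ℕ, γ k = 2 * (n : ℝ) / ((k : ℝ) + 2 * (n : ℝ)))
    (s : (Fin n → E) → Fin n → E)
    (hs : ∀ x : Fin n → E, ∀ i : Fin n, s x i ∈ D i ∧
      ∀ y ∈ D i, ⟪gradient Ψ (∑ j, x j), s x i⟫ ≤ ⟪gradient Ψ (∑ j, x j), y⟫)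
    (X : (ℕ → Finset (Fin n)) → ℕ → Fin n → E)
    (hX0 : ∀ ω, X ω 0 = x0)
    (hXstep : ∀ ω : ℕ → Finset (Fin n), ∀ k : ℕ, ∀ i : Fin n,
      X ω (k + 1) i =
        if i ∈ ω k then X ω k i + (γ k / (m : ℝ)) • (s (X ω k) i - X ω k i)
        else X ω k i)
    (Ψstar : ℝ)
    (hΨstar : IsLeast {v : ℝ | ∃ y : Fin n → E, (∀ i, y i ∈ D i) ∧ v = Ψ (∑ i, y i)} Ψstar) :
    ∀ k : ℕ,
      ((n.choose m : ℝ) ^ k)⁻¹ *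
          (∑ σ ∈ Fintype.piFinset
              (fun _ : Fin k => Finset.powersetCard m (Finset.univ : Finset (Fin n))),
            Ψ (∑ i, X (fun j => if h : j < k then σ ⟨j, h⟩
                else Finset.filter (fun i : Fin n => (i : ℕ) < m) Finset.univ) k i))
        - Ψstar
      ≤ 2 * (n : ℝ) / ((k : ℝ) + 2 * (n : ℝ)) * ((∑ i, C i) + Ψ (∑ i, x0 i) - Ψstar) := by
  classical
  have hn : 1 ≤ n := hm.trans hmn
  have hn0 : (0:ℝ) < n := by exact_mod_cast hn
  have hm0 : (0:ℝ) < m := by exact_mod_cast hm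
  have hm1 : (1:ℝ) ≤ m := by exact_mod_cast hm
  have hden : ∀ k : ℕ, (0:ℝ) < (k:ℝ) + 2 * n := by
    intro k
    have := Nat.cast_nonneg (α := ℝ) k
    linarith
  have hγ0 : ∀ k : ℕ, 0 ≤ γ k := by
    intro k; rw [hγ]
    exact div_nonneg (by linarith) (hden k).le
  have hγ1 : ∀ k : ℕ, γ k ≤ 1 := by
    intro k; rw [hγ, div_le_one (hden k)]
    linarith [Nat.cast_nonneg (α := ℝ) k]
  -- membership of iterates
  have hmem : ∀ ω k (i : Fin n), X ω k i ∈ D i := by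
    intro ω k
    induction k with
    | zero => intro i; rw [hX0]; exact hx0 i
    | succ k ih =>
      intro i
      rw [hXstep]
      split_ifs with hiI
      · have hc0 : 0 ≤ γ k / m := div_nonneg (hγ0 k) hm0.le
        have hc1 : γ k / m ≤ 1 := by
          rw [div_le_one hm0]; linarith [hγ1 k]
        have heq : X ω k i + (γ k / m) • (s (X ω k) i - X ω k i)
            = (1 - γ k / m) • X ω k i + (γ k / m) • s (X ω k) i := by module
        rw [heq]
        exact hDconv i (ih i) ((hs (X ω k) i).1) (by linarith) hc0 (by ring)
      · exact ih i
  -- gradient inequality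
  have hgrad : ∀ u v : E, ⟪gradient Ψ u, v - u⟫ ≤ Ψ v - Ψ u :=
    fun u v => sofw_gradient_ineq hconv hdiff u v
  obtain ⟨⟨ystar, hystar, hyval⟩, hlb⟩ := hΨstar
  -- duality gap bound
  have hgap : ∀ x : Fin n → E, (∀ i, x i ∈ D i) →
      ∑ i, ⟪gradient Ψ (∑ j, x j), s x i - x i⟫ ≤ Ψstar - Ψ (∑ j, x j) := by
    intro x hx
    have h1 : ∀ i : Fin n, ⟪gradient Ψ (∑ j, x j), s x i - x i⟫
        ≤ ⟪gradient Ψ (∑ j, x j), ystar i - x i⟫ := by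
      intro i
      have h2 := (hs x i).2 (ystar i) (hystar i)
      rw [inner_sub_right, inner_sub_right]
      linarith
    calc ∑ i, ⟪gradient Ψ (∑ j, x j), s x i - x i⟫
        ≤ ∑ i, ⟪gradient Ψ (∑ j, x j), ystar i - x i⟫ := Finset.sum_le_sum fun i _ => h1 i
      _ = ⟪gradient Ψ (∑ j, x j), (∑ i, ystar i) - ∑ j, x j⟫ := by
          rw [← inner_sum, Finset.sum_sub_distrib]
      _ ≤ Ψ (∑ i, ystar i) - Ψ (∑ j, x j) := hgrad _ _
      _ = Ψstar - Ψ (∑ j, x j) := by rw [hyval]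
  -- one-step descent bound
  have hstep : ∀ (x : Fin n → E), (∀ i, x i ∈ D i) → ∀ (k : ℕ) (I : Finset (Fin n)),
      I.card = m →
      Ψ (∑ i, (if i ∈ I then x i + (γ k / m) • (s x i - x i) else x i))
        ≤ Ψ (∑ j, x j) + (γ k / m) * (∑ i ∈ I, ⟪gradient Ψ (∑ j, x j), s x i - x i⟫)
          + (γ k)^2/(2*m) * ∑ i ∈ I, C i := by
    intro x hx k I hI
    have hw1 : ∑ _i ∈ I, (1/(m:ℝ)) = 1 := by
      rw [Finset.sum_const, hI, nsmul_eq_mul]; field_simp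
    have hsumL : ∑ i, (if i ∈ I then x i + (γ k/m) • (s x i - x i) else x i)
        = (∑ j, x j) + (γ k/m) • ∑ i ∈ I, (s x i - x i) := by
      have h1 : ∀ i : Fin n, (if i ∈ I then x i + (γ k/m) • (s x i - x i) else x i)
          = x i + (if i ∈ I then (γ k/m) • (s x i - x i) else 0) := by
        intro i; split_ifs <;> simp
      rw [Finset.sum_congr rfl fun i _ => h1 i, Finset.sum_add_distrib,
        Finset.sum_ite_mem, Finset.univ_inter, Finset.smul_sum]
    have hsumR : ∑ i ∈ I, (1/(m:ℝ)) • ((∑ j, x j) + γ k • (s x i - x i))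
        = (∑ j, x j) + (γ k/m) • ∑ i ∈ I, (s x i - x i) := by
      simp only [smul_add, Finset.sum_add_distrib, Finset.sum_const, hI, smul_smul]
      rw [← Finset.smul_sum]
      congr 1
      · rw [← Nat.cast_smul_eq_nsmul ℝ, smul_smul,
          show (m:ℝ) * (1/m) = 1 by field_simp, one_smul]
      · congr 1; field_simp
    have hjen : Ψ (∑ i ∈ I, (1/(m:ℝ)) • ((∑ j, x j) + γ k • (s x i - x i)))
        ≤ ∑ i ∈ I, (1/(m:ℝ)) * Ψ ((∑ j, x j) + γ k • (s x i - x i)) :=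
      hconv.map_sum_le (fun i _ => by positivity) hw1 (fun i _ => Set.mem_univ _)
    have hcur : ∀ i ∈ I, Ψ ((∑ j, x j) + γ k • (s x i - x i))
        ≤ Ψ (∑ j, x j) + γ k * ⟪gradient Ψ (∑ j, x j), s x i - x i⟫ + (γ k)^2/2 * C i :=
      fun i _ => hcurv x hx i (s x i) (hs x i).1 (γ k) ⟨hγ0 k, hγ1 k⟩
    have hsum2 : ∑ i ∈ I, (1/(m:ℝ)) * Ψ ((∑ j, x j) + γ k • (s x i - x i))
        ≤ ∑ i ∈ I, (1/(m:ℝ)) * (Ψ (∑ j, x j)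
            + γ k * ⟪gradient Ψ (∑ j, x j), s x i - x i⟫ + (γ k)^2/2 * C i) :=
      Finset.sum_le_sum fun i hi => mul_le_mul_of_nonneg_left (hcur i hi) (by positivity)
    have hsum3 : ∑ i ∈ I, (1/(m:ℝ)) * (Ψ (∑ j, x j)
          + γ k * ⟪gradient Ψ (∑ j, x j), s x i - x i⟫ + (γ k)^2/2 * C i)
        = Ψ (∑ j, x j) + (γ k/m) * (∑ i ∈ I, ⟪gradient Ψ (∑ j, x j), s x i - x i⟫)
          + ((γ k)^2/(2*m)) * ∑ i ∈ I, C i := by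
      have expand : ∀ i : Fin n, (1/(m:ℝ)) * (Ψ (∑ j, x j)
            + γ k * ⟪gradient Ψ (∑ j, x j), s x i - x i⟫ + (γ k)^2/2 * C i)
          = (1/m) * Ψ (∑ j, x j) + (γ k/m) * ⟪gradient Ψ (∑ j, x j), s x i - x i⟫
            + ((γ k)^2/(2*m)) * C i := fun i => by field_simp
      rw [Finset.sum_congr rfl (fun i _ => expand i), Finset.sum_add_distrib,
        Finset.sum_add_distrib, Finset.sum_const, hI, ← Finset.mul_sum, ← Finset.mul_sum,
        nsmul_eq_mul]
      field_simp
    calc Ψ (∑ i, (if i ∈ I then x i + (γ k/m) • (s x i - x i) else x i))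
        = Ψ (∑ i ∈ I, (1/(m:ℝ)) • ((∑ j, x j) + γ k • (s x i - x i))) := by
          rw [hsumL, ← hsumR]
      _ ≤ _ := hjen
      _ ≤ _ := hsum2
      _ = _ := hsum3
  -- dependence on the first k batches only
  have hXdep : ∀ (ω ω' : ℕ → Finset (Fin n)) (k : ℕ),
      (∀ j, j < k → ω j = ω' j) → X ω k = X ω' k := by
    intro ω ω' k
    induction k with
    | zero => intro _; rw [hX0, hX0]
    | succ k ih =>
      intro hag
      have hk := ih fun j hj => hag j (hj.trans (Nat.lt_succ_self k))
      funext i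
      rw [hXstep, hXstep, hk, hag k (Nat.lt_succ_self k)]
  -- counting identity over the reals
  have hnatN : n * ((n-1).choose (m-1)) = n.choose m * m := by
    have h := Nat.add_one_mul_choose_eq (n-1) (m-1)
    have e1 : n - 1 + 1 = n := Nat.succ_pred_eq_of_pos hn
    have e2 : m - 1 + 1 = m := Nat.succ_pred_eq_of_pos hm
    rw [e1, e2] at h
    exact h
  set N : ℝ := (n.choose m : ℝ) with hNdef
  set R : ℝ := (((n:ℕ)-1).choose (m-1) : ℝ) with hRdef
  have hNpos : 0 < N := by rw [hNdef]; exact_mod_cast Nat.choose_pos hmn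
  have hR0 : 0 ≤ R := by rw [hRdef]; positivity
  have hRN : (n:ℝ) * R = N * m := by
    rw [hRdef, hNdef]
    exact_mod_cast hnatN
  have hRdiv : R / m = N / n := by
    rw [div_eq_div_iff hm0.ne' hn0.ne']
    linarith [hRN]
  set Cq : ℝ := ∑ i, C i with hCqdef
  have hCq0 : 0 ≤ Cq := Finset.sum_nonneg fun i _ => hC0 i
  set B : ℝ := Cq + Ψ (∑ i, x0 i) - Ψstar with hBdef
  have hx0gap : Ψstar ≤ Ψ (∑ i, x0 i) := hlb ⟨x0, hx0, rfl⟩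
  have hCqB : Cq ≤ B := by rw [hBdef]; linarith
  set PP : Finset (Finset (Fin n)) := Finset.powersetCard m (Finset.univ : Finset (Fin n))
    with hPPdef
  have hcardPP : PP.card = n.choose m := by
    rw [hPPdef, Finset.card_powersetCard, Finset.card_univ, Fintype.card_fin]
  have hcardPi : ∀ k : ℕ, ((Fintype.piFinset (fun _ : Fin k => PP)).card : ℝ) = N ^ k := by
    intro k
    rw [Fintype.card_piFinset, Finset.prod_const, hcardPP]
    push_cast
    simp [hNdef]
  -- the expected-value recursion
  have main := sofw_rec_bound hn Cq B hCq0 hCqB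
    (fun k => (N ^ k)⁻¹ *
        (∑ σ ∈ Fintype.piFinset (fun _ : Fin k => PP),
          Ψ (∑ i, X (fun j => if h : j < k then σ ⟨j, h⟩
              else Finset.filter (fun i : Fin n => (i : ℕ) < m) Finset.univ) k i))
      - Ψstar)
    (by
      -- base case
      show (N ^ 0)⁻¹ * _ - Ψstar ≤ B
      have hval : ∀ σ ∈ Fintype.piFinset (fun _ : Fin 0 => PP),
          Ψ (∑ i, X (fun j => if h : j < 0 then σ ⟨j, h⟩
              else Finset.filter (fun i : Fin n => (i : ℕ) < m) Finset.univ) 0 i)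
            = Ψ (∑ i, x0 i) := by
        intro σ _
        rw [hX0]
      rw [Finset.sum_congr rfl hval, Finset.sum_const, nsmul_eq_mul]
      have : ((Fintype.piFinset (fun _ : Fin 0 => PP)).card : ℝ) = 1 := by
        rw [hcardPi 0, pow_zero]
      rw [this, pow_zero, inv_one, one_mul, one_mul, hBdef]
      linarith)
    (by
      -- recursion step
      intro k
      show (N ^ (k+1))⁻¹ *
          (∑ σ ∈ Fintype.piFinset (fun _ : Fin (k+1) => PP),
            Ψ (∑ i, X (fun j => if h : j < k + 1 then σ ⟨j, h⟩
                else Finset.filter (fun i : Fin n => (i : ℕ) < m) Finset.univ) (k+1) i))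
          - Ψstar
        ≤ (1 - 2 / ((k : ℝ) + 2 * n)) *
            ((N ^ k)⁻¹ *
              (∑ σ ∈ Fintype.piFinset (fun _ : Fin k => PP),
                Ψ (∑ i, X (fun j => if h : j < k then σ ⟨j, h⟩
                    else Finset.filter (fun i : Fin n => (i : ℕ) < m) Finset.univ) k i))
              - Ψstar)
          + (2 * (n : ℝ) / ((k : ℝ) + 2 * n)) ^ 2 / (2 * n) * Cq
      set dflt : Finset (Fin n) := Finset.filter (fun i : Fin n => (i : ℕ) < m) Finset.univ
        with hdflt
      -- split off the last batch
      rw [sofw_sum_snoc k PP (fun σ => Ψ (∑ i, X (fun j => if h : j < k + 1 then σ ⟨j, h⟩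
          else dflt) (k+1) i))]
      -- per-trajectory bound
      have hper : ∀ σ' ∈ Fintype.piFinset (fun _ : Fin k => PP),
          ∑ I ∈ PP, Ψ (∑ i, X (fun j => if h : j < k + 1 then (Fin.snoc σ' I : Fin (k+1) → Finset (Fin n)) ⟨j, h⟩
              else dflt) (k+1) i)
            ≤ N * ((1 - γ k / n) *
                Ψ (∑ i, X (fun j => if h : j < k then σ' ⟨j, h⟩ else dflt) k i)
              + (γ k / n) * Ψstar + (γ k)^2/(2*n) * Cq) := by
        intro σ' _
        set ω' : ℕ → Finset (Fin n) := fun j => if h : j < k then σ' ⟨j, h⟩ else dflt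
          with hω'
        set xk : Fin n → E := X ω' k with hxk
        have hxkmem : ∀ i, xk i ∈ D i := fun i => hmem ω' k i
        set A : ℝ := Ψ (∑ j, xk j) with hA
        set g : Fin n → ℝ := fun i => ⟪gradient Ψ (∑ j, xk j), s xk i - xk i⟫ with hgdef
        -- each summand
        have hFbound : ∀ I ∈ PP,
            Ψ (∑ i, X (fun j => if h : j < k + 1 then (Fin.snoc σ' I : Fin (k+1) → Finset (Fin n)) ⟨j, h⟩ else dflt) (k+1) i)
              ≤ A + (γ k / m) * (∑ i ∈ I, g i) + (γ k)^2/(2*m) * ∑ i ∈ I, C i := by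
          intro I hI
          have hIcard : I.card = m := (Finset.mem_powersetCard.1 hI).2
          set ωI : ℕ → Finset (Fin n) :=
            fun j => if h : j < k + 1 then (Fin.snoc σ' I : Fin (k+1) → Finset (Fin n)) ⟨j, h⟩ else dflt with hωI
          have hXk : X ωI k = xk := by
            rw [hxk]
            apply hXdep
            intro j hj
            have h1 : j < k + 1 := hj.trans (Nat.lt_succ_self k)
            show (if h : j < k + 1 then (Fin.snoc σ' I : Fin (k+1) → Finset (Fin n)) ⟨j, h⟩ else dflt)
              = (if h : j < k then σ' ⟨j, h⟩ else dflt)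
            rw [dif_pos h1, dif_pos hj]
            simp [Fin.snoc, hj]
          have hbatch : ωI k = I := by
            show (if h : k < k + 1 then (Fin.snoc σ' I : Fin (k+1) → Finset (Fin n)) ⟨k, h⟩ else dflt) = I
            rw [dif_pos (Nat.lt_succ_self k)]
            show (Fin.snoc σ' I : Fin (k+1) → Finset (Fin n)) (Fin.last k) = I
            simp
          have hiter : ∀ i : Fin n, X ωI (k+1) i
              = (if i ∈ I then xk i + (γ k / m) • (s xk i - xk i) else xk i) := by
            intro i
            rw [hXstep, hbatch, hXk]
          have heqsum : (∑ i, X ωI (k+1) i)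
              = ∑ i, (if i ∈ I then xk i + (γ k / m) • (s xk i - xk i) else xk i) :=
            Finset.sum_congr rfl fun i _ => hiter i
          calc Ψ (∑ i, X ωI (k+1) i)
              = Ψ (∑ i, (if i ∈ I then xk i + (γ k / m) • (s xk i - xk i) else xk i)) := by
                rw [heqsum]
            _ ≤ _ := hstep xk hxkmem k I hIcard
        -- sum over batches
        have hsum1 : ∑ I ∈ PP, (A + (γ k / m) * (∑ i ∈ I, g i) + (γ k)^2/(2*m) * ∑ i ∈ I, C i)
            = N * A + (γ k / m) * (R * ∑ i, g i) + (γ k)^2/(2*m) * (R * Cq) := by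
          rw [Finset.sum_add_distrib, Finset.sum_add_distrib, Finset.sum_const,
            ← Finset.mul_sum, ← Finset.mul_sum, sofw_sum_batch g hm, sofw_sum_batch C hm,
            hcardPP, nsmul_eq_mul, hCqdef, hNdef, hRdef]
        have hgle : ∑ i, g i ≤ Ψstar - A := hgap xk hxkmem
        have hc1 : 0 ≤ (γ k / m) * R := mul_nonneg (div_nonneg (hγ0 k) hm0.le) hR0
        have hstep2 : ∑ I ∈ PP, Ψ (∑ i, X (fun j => if h : j < k + 1 then (Fin.snoc σ' I : Fin (k+1) → Finset (Fin n)) ⟨j, h⟩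
              else dflt) (k+1) i)
            ≤ N * A + (γ k / m) * (R * (Ψstar - A)) + (γ k)^2/(2*m) * (R * Cq) := by
          have h1 := Finset.sum_le_sum hFbound
          rw [hsum1] at h1
          have h2 : (γ k / m) * (R * ∑ i, g i) ≤ (γ k / m) * (R * (Ψstar - A)) := by
            have := mul_le_mul_of_nonneg_left hgle hR0
            have := mul_le_mul_of_nonneg_left this (div_nonneg (hγ0 k) hm0.le)
            linarith
          linarith
        -- convert coefficients using R/m = N/n
        have hcoef1 : (γ k / m) * (R * (Ψstar - A)) = (γ k / n) * N * (Ψstar - A) := by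
          rw [show (γ k / m) * (R * (Ψstar - A)) = (γ k * (R / m)) * (Ψstar - A) by ring, hRdiv]
          ring
        have hcoef2 : (γ k)^2/(2*m) * (R * Cq) = (γ k)^2/(2*n) * N * Cq := by
          rw [show (γ k)^2/(2*m) * (R * Cq) = ((γ k)^2/2 * (R / m)) * Cq by ring, hRdiv]
          ring
        rw [hcoef1, hcoef2] at hstep2
        calc ∑ I ∈ PP, Ψ (∑ i, X (fun j => if h : j < k + 1 then (Fin.snoc σ' I : Fin (k+1) → Finset (Fin n)) ⟨j, h⟩
              else dflt) (k+1) i)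
            ≤ N * A + (γ k / n) * N * (Ψstar - A) + (γ k)^2/(2*n) * N * Cq := hstep2
          _ = N * ((1 - γ k / n) * A + (γ k / n) * Ψstar + (γ k)^2/(2*n) * Cq) := by ring
      -- sum the per-trajectory bound over σ'
      have hS := Finset.sum_le_sum hper
      have hRHS : ∑ σ' ∈ Fintype.piFinset (fun _ : Fin k => PP),
          N * ((1 - γ k / n) *
              Ψ (∑ i, X (fun j => if h : j < k then σ' ⟨j, h⟩ else dflt) k i)
            + (γ k / n) * Ψstar + (γ k)^2/(2*n) * Cq)
          = N * (1 - γ k / n) *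
              (∑ σ' ∈ Fintype.piFinset (fun _ : Fin k => PP),
                Ψ (∑ i, X (fun j => if h : j < k then σ' ⟨j, h⟩ else dflt) k i))
            + N ^ k * N * ((γ k / n) * Ψstar + (γ k)^2/(2*n) * Cq) := by
        rw [Finset.sum_congr rfl (fun σ' _ => by ring :
          ∀ σ' ∈ Fintype.piFinset (fun _ : Fin k => PP),
            N * ((1 - γ k / n) *
                Ψ (∑ i, X (fun j => if h : j < k then σ' ⟨j, h⟩ else dflt) k i)
              + (γ k / n) * Ψstar + (γ k)^2/(2*n) * Cq)
            = N * (1 - γ k / n) *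
                Ψ (∑ i, X (fun j => if h : j < k then σ' ⟨j, h⟩ else dflt) k i)
              + N * ((γ k / n) * Ψstar + (γ k)^2/(2*n) * Cq)),
          Finset.sum_add_distrib, ← Finset.mul_sum, Finset.sum_const, nsmul_eq_mul, hcardPi k]
        ring
      -- put everything together
      set Sk : ℝ := ∑ σ' ∈ Fintype.piFinset (fun _ : Fin k => PP),
          Ψ (∑ i, X (fun j => if h : j < k then σ' ⟨j, h⟩ else dflt) k i) with hSk
      rw [hRHS] at hS
      have hNk : (0:ℝ) < N ^ k := pow_pos hNpos k
      have hNk1 : (0:ℝ) < N ^ (k+1) := pow_pos hNpos (k+1)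
      have hmulS := mul_le_mul_of_nonneg_left hS (inv_nonneg.2 hNk1.le)
      have hsimp : (N ^ (k+1))⁻¹ * (N * (1 - γ k / n) * Sk
            + N ^ k * N * ((γ k / n) * Ψstar + (γ k)^2/(2*n) * Cq))
          = (1 - γ k / n) * ((N ^ k)⁻¹ * Sk)
            + ((γ k / n) * Ψstar + (γ k)^2/(2*n) * Cq) := by
        rw [pow_succ]
        field_simp
      rw [hsimp] at hmulS
      have hγn : γ k / n = 2 / ((k:ℝ) + 2 * n) := by
        rw [hγ k]
        have h1 : ((k:ℝ) + 2*n) ≠ 0 := (hden k).ne'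
        have h2 : (n:ℝ) ≠ 0 := hn0.ne'
        field_simp
      have hγsq : (γ k)^2/(2*n) = (2 * (n:ℝ) / ((k:ℝ) + 2 * n)) ^ 2 / (2 * n) := by
        rw [hγ k]
      calc (N ^ (k+1))⁻¹ * (∑ σ' ∈ Fintype.piFinset (fun _ : Fin k => PP), ∑ I ∈ PP,
            Ψ (∑ i, X (fun j => if h : j < k + 1 then (Fin.snoc σ' I : Fin (k+1) → Finset (Fin n)) ⟨j, h⟩
                else dflt) (k+1) i)) - Ψstar
          ≤ (1 - γ k / n) * ((N ^ k)⁻¹ * Sk)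
            + ((γ k / n) * Ψstar + (γ k)^2/(2*n) * Cq) - Ψstar := by linarith
        _ = (1 - γ k / n) * ((N ^ k)⁻¹ * Sk - Ψstar) + (γ k)^2/(2*n) * Cq := by ring
        _ = (1 - 2 / ((k:ℝ) + 2 * n)) * ((N ^ k)⁻¹ * Sk - Ψstar)
            + (2 * (n:ℝ) / ((k:ℝ) + 2 * n)) ^ 2 / (2 * n) * Cq := by
          rw [hγn, hγsq]
        )
  intro k
  exact main k
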